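/- Under the product uncertainty assumption, with factorized uncertain variables X(1:n), Y(1:n) and 0 ≤ δ < min_{i, x(i)} m_𝒴(⟦Y(i)|x(i)⟧), every set 𝒮 = 𝒮₁ × ⋯ × 𝒮ₙ in the product family ∏_{i=1}^n ⟦Y(i)|X(i)⟧*_δ is δⁿ-connected via ⟦Y(1:n)|X(1:n)⟧ and contains at least one singly δⁿ-connected set of the form ⟦Y(1:n)|x(1:n)⟧. -/

import Mathlib

open Set Real

namespace NSIT

variable {Ω 𝒳 𝒴 : Type*}

/-- The conditional range `⟦X|y⟧` of an uncertain variable `X` given that the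
uncertain variable `Y` takes the value `y`. -/
def condRange (X : Ω → 𝒳) (Y : Ω → 𝒴) (y : 𝒴) : Set 𝒳 :=
  X '' {ω | Y ω = y}

/-- `m` is an uncertainty function: it vanishes on the empty set, is positive (and
finite, being real-valued) on nonempty sets, and is strongly transitive. -/
def IsUncertaintyFn (m : Set 𝒳 → ℝ) : Prop :=
  m ∅ = 0 ∧ (∀ S : Set 𝒳, S.Nonempty → 0 < m S) ∧
    ∀ S₁ S₂ : Set 𝒳, max (m S₁) (m S₂) ≤ m (S₁ ∪ S₂)

/-- The set of association `𝒜(X;Y)`: all nonzero relative uncertainties of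
intersections of two distinct conditional ranges of `X` given values of `Y`. -/
def assocSet (mX : Set 𝒳 → ℝ) (X : Ω → 𝒳) (Y : Ω → 𝒴) : Set ℝ :=
  {r | r ≠ 0 ∧ ∃ y₁ ∈ Set.range Y, ∃ y₂ ∈ Set.range Y, y₁ ≠ y₂ ∧
    r = mX (condRange X Y y₁ ∩ condRange X Y y₂) / mX (Set.range X)}

/-- `X` and `Y` are associated at levels `(δ₁, δ₂)`:
`𝒜(X;Y) ⪯ δ₁` and `𝒜(Y;X) ⪯ δ₂` (vacuously true for empty association sets). -/
def Associated (mX : Set 𝒳 → ℝ) (mY : Set 𝒴 → ℝ) (X : Ω → 𝒳) (Y : Ω → 𝒴)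
    (δ₁ δ₂ : ℝ) : Prop :=
  (∀ r ∈ assocSet mX X Y, r ≤ δ₁) ∧ ∀ r ∈ assocSet mY Y X, r ≤ δ₂

/-- `X` and `Y` are disassociated at levels `(δ₁, δ₂)`:
`𝒜(X;Y) ≻ δ₁` and `𝒜(Y;X) ≻ δ₂` (which in particular requires the association
sets to be nonempty). -/
def Disassociated (mX : Set 𝒳 → ℝ) (mY : Set 𝒴 → ℝ) (X : Ω → 𝒳) (Y : Ω → 𝒴)
    (δ₁ δ₂ : ℝ) : Prop :=
  (assocSet mX X Y).Nonempty ∧ (∀ r ∈ assocSet mX X Y, δ₁ < r) ∧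
    (assocSet mY Y X).Nonempty ∧ ∀ r ∈ assocSet mY Y X, δ₂ < r

/-- `x₁` and `x₂` are `δ`-connected via `⟦X|Y⟧`: there is a finite chain of
conditional ranges joining them whose consecutive intersections have relative
uncertainty greater than `δ`. -/
def Conn (mX : Set 𝒳 → ℝ) (X : Ω → 𝒳) (Y : Ω → 𝒴) (δ : ℝ) (x₁ x₂ : 𝒳) : Prop :=
  ∃ (N : ℕ) (ys : Fin (N + 1) → 𝒴),
    x₁ ∈ condRange X Y (ys 0) ∧ x₂ ∈ condRange X Y (ys (Fin.last N)) ∧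
    ∀ i : Fin N,
      δ < mX (condRange X Y (ys i.succ) ∩ condRange X Y (ys i.castSucc)) /
        mX (Set.range X)

/-- `F` is a `δ`-overlap family (for `X` given `Y`): it covers `⟦X⟧`, each member
is `δ`-connected and contains a singly `δ`-connected set of the form `⟦X|y⟧`,
any two distinct members overlap with uncertainty at most `δ · m(⟦X⟧)`, and every
conditional range `⟦X|y⟧` is contained in some member. -/
def IsOverlapFamily (mX : Set 𝒳 → ℝ) (X : Ω → 𝒳) (Y : Ω → 𝒴) (δ : ℝ)
    (F : Set (Set 𝒳)) : Prop :=
  ⋃₀ F = Set.range X ∧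
  (∀ S ∈ F, (∀ x₁ ∈ S, ∀ x₂ ∈ S, Conn mX X Y δ x₁ x₂) ∧
    ∃ y ∈ Set.range Y, condRange X Y y ⊆ S) ∧
  (∀ S₁ ∈ F, ∀ S₂ ∈ F, S₁ ≠ S₂ → mX (S₁ ∩ S₂) ≤ δ * mX (Set.range X)) ∧
  ∀ y ∈ Set.range Y, ∃ S ∈ F, condRange X Y y ⊆ S

-- AUX START
lemma uf_mono {m : Set 𝒳 → ℝ} (hm : IsUncertaintyFn m) {S T : Set 𝒳} (h : S ⊆ T) :
    m S ≤ m T := by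
  have := hm.2.2 S T
  rw [Set.union_eq_self_of_subset_left h] at this
  exact le_trans (le_max_left _ _) this

lemma uf_nonempty {m : Set 𝒳 → ℝ} (hm : IsUncertaintyFn m) {S : Set 𝒳} (h : 0 < m S) :
    S.Nonempty := by
  rcases S.eq_empty_or_nonempty with rfl | h'
  · rw [hm.1] at h; exact absurd h (lt_irrefl 0)
  · exact h'

/-- convert a `Fin`-indexed chain into a `ReflTransGen` path. -/
lemma finChain_rtg {α : Type*} {P : α → α → Prop} :
    ∀ {N : ℕ} (ys : Fin (N + 1) → α),
      (∀ k : Fin N, P (ys k.castSucc) (ys k.succ)) →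
      Relation.ReflTransGen P (ys 0) (ys (Fin.last N))
  := by
  intro N ys h
  suffices H : ∀ k (hk : k ≤ N), Relation.ReflTransGen P (ys 0) (ys ⟨k, by omega⟩) by
    have := H N le_rfl
    convert this using 2 <;> rfl
  intro k
  induction k with
  | zero =>
      intro _
      have : (⟨0, by omega⟩ : Fin (N+1)) = 0 := rfl
      rw [this]
  | succ k ih =>
      intro hk
      refine (ih (by omega)).tail ?_
      have := h ⟨k, by omega⟩
      convert this using 2 <;> simp [Fin.ext_iff]

/-- convert a `ReflTransGen` path into a `Conn` witness. -/
lemma conn_of_rtg {mX : Set 𝒳 → ℝ} {X : Ω → 𝒳} {Y : Ω → 𝒴} {δ : ℝ}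
    {x₁ x₂ : 𝒳} {a b : 𝒴}
    (h : Relation.ReflTransGen
      (fun u v => δ < mX (condRange X Y v ∩ condRange X Y u) / mX (Set.range X)) a b)
    (h₁ : x₁ ∈ condRange X Y a) (h₂ : x₂ ∈ condRange X Y b) :
    Conn mX X Y δ x₁ x₂ := by
  obtain ⟨l, hl, hlast⟩ := List.exists_isChain_cons_of_relationReflTransGen h
  refine ⟨l.length, fun i => (a :: l).get (i.cast (by simp)), ?_, ?_, ?_⟩
  · simpa using h₁
  · have hb : (a :: l).get ⟨l.length, by simp⟩ = b := by
      rw [← hlast, List.getLast_eq_getElem]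
      simp
    show x₂ ∈ condRange X Y ((a :: l).get ⟨l.length, by simp⟩)
    rw [hb]; exact h₂
  · intro i
    have hch : List.IsChain (fun u v => δ < mX (condRange X Y v ∩ condRange X Y u) /
        mX (Set.range X)) (a :: l) := hl
    have := List.isChain_iff_getElem.mp hch i (by simp)
    exact this


/-- Lemma 2, parts 2: under the product uncertainty assumption,
every member of the product of per-coordinate `δ`-overlap families is
`δⁿ`-connected via `⟦Y(1:n)|X(1:n)⟧` and contains a singly `δⁿ`-connected set of
the form `⟦Y(1:n)|x(1:n)⟧`. -/
theorem product_family_connected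
    {Ω 𝒳 𝒴 : Type*} {n : ℕ}
    (m1 : Set 𝒴 → ℝ) (mn : Set (Fin n → 𝒴) → ℝ)
    (hm1 : IsUncertaintyFn m1) (hmn : IsUncertaintyFn mn)
    (hprod : ∀ S : Fin n → Set 𝒴, mn (Set.univ.pi S) = ∏ i, m1 (S i))
    (hm1univ : m1 Set.univ = 1) (hmnuniv : mn Set.univ = 1)
    (Xv : Ω → Fin n → 𝒳) (Yv : Ω → Fin n → 𝒴) (δ : ℝ)
    (hX : Set.range Xv = Set.univ.pi fun i => Set.range fun ω => Xv ω i)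
    (hY : ∀ xv ∈ Set.range Xv,
      condRange Yv Xv xv =
        Set.univ.pi fun i =>
          condRange (fun ω => Yv ω i) (fun ω => Xv ω i) (xv i))
    (hδ0 : 0 ≤ δ)
    (hδ : δ < sInf {r | ∃ i : Fin n, ∃ x ∈ Set.range fun ω => Xv ω i,
      r = m1 (condRange (fun ω => Yv ω i) (fun ω => Xv ω i) x)})
    (F : Fin n → Set (Set 𝒴))
    (hF : ∀ i, IsOverlapFamily m1 (fun ω => Yv ω i) (fun ω => Xv ω i) δ (F i))
    (g : Fin n → Set 𝒴) (hg : ∀ i, g i ∈ F i) :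
    (∀ y₁ ∈ Set.univ.pi g, ∀ y₂ ∈ Set.univ.pi g,
      Conn mn Yv Xv (δ ^ n) y₁ y₂) ∧
    ∃ xv ∈ Set.range Xv, condRange Yv Xv xv ⊆ Set.univ.pi g := by
  classical
  -- n is positive
  have hn : 0 < n := by
    rcases Nat.eq_zero_or_pos n with rfl | hn
    · exfalso
      have hempty : {r | ∃ i : Fin 0, ∃ x ∈ Set.range fun ω => Xv ω i,
          r = m1 (condRange (fun ω => Yv ω i) (fun ω => Xv ω i) x)} = ∅ := by
        ext r; simp
      rw [hempty, Real.sInf_empty] at hδ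
      linarith
    · exact hn
  haveI : Nonempty (Fin n) := ⟨⟨0, hn⟩⟩
  -- conditional ranges are nonempty for x in range
  have hcne : ∀ (i : Fin n) (x : 𝒳), x ∈ Set.range (fun ω => Xv ω i) →
      (condRange (fun ω => Yv ω i) (fun ω => Xv ω i) x).Nonempty := by
    rintro i x ⟨ω, rfl⟩
    exact ⟨Yv ω i, ω, rfl, rfl⟩
  have hrmem : ∀ (i : Fin n) (x : 𝒳),
      (condRange (fun ω => Yv ω i) (fun ω => Xv ω i) x).Nonempty →
      x ∈ Set.range (fun ω => Xv ω i) := by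
    rintro i x ⟨y, ω, hω, -⟩
    exact ⟨ω, hω⟩
  -- the per-coordinate uncertainty bound
  have hδ' : ∀ (i : Fin n) (x : 𝒳), x ∈ Set.range (fun ω => Xv ω i) →
      δ < m1 (condRange (fun ω => Yv ω i) (fun ω => Xv ω i) x) := by
    intro i x hx
    refine lt_of_lt_of_le hδ (csInf_le ⟨0, ?_⟩ ⟨i, x, hx, rfl⟩)
    rintro r ⟨j, x', hx', rfl⟩
    exact le_of_lt (hm1.2.1 _ (hcne j x' hx'))
  -- choose the singly connected sets
  have hsingly : ∀ i, ∃ x ∈ Set.range (fun ω => Xv ω i),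
      condRange (fun ω => Yv ω i) (fun ω => Xv ω i) x ⊆ g i :=
    fun i => ((hF i).2.1 (g i) (hg i)).2
  choose xv hxv1 hxv2 using hsingly
  have hΩ : Nonempty Ω := by
    obtain ⟨ω, -⟩ := hxv1 ⟨0, hn⟩
    exact ⟨ω⟩
  obtain ⟨ω₀⟩ := hΩ
  have hxvr : xv ∈ Set.range Xv := by
    rw [hX]; exact fun i _ => hxv1 i
  -- memberships in range of Xv from coordinates
  have hmemX : ∀ u : Fin n → 𝒳, (∀ i, u i ∈ Set.range (fun ω => Xv ω i)) →
      u ∈ Set.range Xv := by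
    intro u hu; rw [hX]; exact fun i _ => hu i
  -- positivity facts
  have hrY_pos : ∀ i, 0 < m1 (Set.range (fun ω => Yv ω i)) :=
    fun i => hm1.2.1 _ ⟨Yv ω₀ i, ω₀, rfl⟩
  have hrY_le1 : ∀ i, m1 (Set.range (fun ω => Yv ω i)) ≤ 1 := by
    intro i
    rw [← hm1univ]
    exact uf_mono hm1 (Set.subset_univ _)
  have hmnY_pos : 0 < mn (Set.range Yv) := hmn.2.1 _ ⟨Yv ω₀, ω₀, rfl⟩
  have hmnY_le : ∀ j, mn (Set.range Yv) ≤ m1 (Set.range (fun ω => Yv ω j)) := by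
    intro j
    have h1 : Set.range Yv ⊆ Set.univ.pi (fun i => Set.range fun ω => Yv ω i) := by
      rintro _ ⟨ω, rfl⟩ i _; exact ⟨ω, rfl⟩
    refine le_trans (uf_mono hmn h1) ?_
    rw [hprod]
    calc ∏ i, m1 (Set.range fun ω => Yv ω i)
        = m1 (Set.range fun ω => Yv ω j) *
          ∏ i ∈ Finset.univ.erase j, m1 (Set.range fun ω => Yv ω i) :=
          (Finset.mul_prod_erase _ _ (Finset.mem_univ j)).symm
      _ ≤ m1 (Set.range fun ω => Yv ω j) * 1 := by
          refine mul_le_mul_of_nonneg_left ?_ (le_of_lt (hrY_pos j))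
          exact Finset.prod_le_one (fun i _ => le_of_lt (hrY_pos i)) (fun i _ => hrY_le1 i)
      _ = m1 (Set.range fun ω => Yv ω j) := mul_one _
  -- the global step relation (as used in Conn)
  set R : (Fin n → 𝒳) → (Fin n → 𝒳) → Prop := fun u v =>
    δ ^ n < mn (condRange Yv Xv v ∩ condRange Yv Xv u) / mn (Set.range Yv) with hRdef
  -- the per-coordinate step relation
  set r : Fin n → 𝒳 → 𝒳 → Prop := fun j s t =>
    s ∈ Set.range (fun ω => Xv ω j) ∧ t ∈ Set.range (fun ω => Xv ω j) ∧
      δ * m1 (Set.range (fun ω => Yv ω j)) <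
        m1 (condRange (fun ω => Yv ω j) (fun ω => Xv ω j) t ∩
          condRange (fun ω => Yv ω j) (fun ω => Xv ω j) s) with hrdef
  -- one elementary step in the product
  have hstep : ∀ (w : Fin n → 𝒳), (∀ i, w i ∈ Set.range (fun ω => Xv ω i)) →
      ∀ (j : Fin n) (s t : 𝒳), r j s t →
      R (Function.update w j s) (Function.update w j t) := by
    intro w hw j s t ⟨hs, ht, hst⟩
    have hws : ∀ i, Function.update w j s i ∈ Set.range (fun ω => Xv ω i) := by
      intro i
      rcases eq_or_ne i j with rfl | hij
      · simpa using hs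
      · simpa [Function.update_of_ne hij] using hw i
    have hwt : ∀ i, Function.update w j t i ∈ Set.range (fun ω => Xv ω i) := by
      intro i
      rcases eq_or_ne i j with rfl | hij
      · simpa using ht
      · simpa [Function.update_of_ne hij] using hw i
    show δ ^ n < mn (condRange Yv Xv (Function.update w j t) ∩
      condRange Yv Xv (Function.update w j s)) / mn (Set.range Yv)
    have hYs := hY _ (hmemX _ hws)
    have hYt := hY _ (hmemX _ hwt)
    rw [hYs, hYt, ← Set.pi_inter_distrib, hprod]
    rw [lt_div_iff₀ hmnY_pos]
    set C : Fin n → Set 𝒴 := fun i =>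
      condRange (fun ω => Yv ω i) (fun ω => Xv ω i) (Function.update w j t i) ∩
        condRange (fun ω => Yv ω i) (fun ω => Xv ω i) (Function.update w j s i) with hCdef
    have hCj : m1 (C j) = m1 (condRange (fun ω => Yv ω j) (fun ω => Xv ω j) t ∩
        condRange (fun ω => Yv ω j) (fun ω => Xv ω j) s) := by
      rw [hCdef]; simp
    have hCi : ∀ i, i ≠ j →
        m1 (C i) = m1 (condRange (fun ω => Yv ω i) (fun ω => Xv ω i) (w i)) := by
      intro i hij
      rw [hCdef]; simp [Function.update_of_ne hij]
    have hCpos : ∀ i, 0 < m1 (C i) := by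
      intro i
      rcases eq_or_ne i j with rfl | hij
      · rw [hCj]
        refine lt_of_le_of_lt ?_ hst
        exact mul_nonneg hδ0 (le_of_lt (hrY_pos _))
      · rw [hCi i hij]
        exact hm1.2.1 _ (hcne i _ (hw i))
    rcases eq_or_lt_of_le hδ0 with rfl | hδpos
    · have : (0:ℝ) ^ n * mn (Set.range Yv) = 0 := by
        rw [zero_pow (show n ≠ 0 by omega), zero_mul]
      rw [this]
      exact Finset.prod_pos (fun i _ => hCpos i)
    · have hf_prod : ∏ i, (if i = j then δ * m1 (Set.range (fun ω => Yv ω j)) else δ)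
          = δ ^ n * m1 (Set.range (fun ω => Yv ω j)) := by
        rw [← Finset.mul_prod_erase _ _ (Finset.mem_univ j), if_pos rfl,
          Finset.prod_congr rfl (fun i hi => if_neg (Finset.ne_of_mem_erase hi)),
          Finset.prod_const, Finset.card_erase_of_mem (Finset.mem_univ j),
          Finset.card_univ, Fintype.card_fin, mul_right_comm, ← pow_succ']
        congr 2
        omega
      have hlt : ∏ i, (if i = j then δ * m1 (Set.range (fun ω => Yv ω j)) else δ)
          < ∏ i, m1 (C i) := by
        refine Finset.prod_lt_prod_of_nonempty ?_ ?_ Finset.univ_nonempty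
        · intro i _
          rcases eq_or_ne i j with rfl | hij
          · rw [if_pos rfl]
            exact mul_pos hδpos (hrY_pos i)
          · rw [if_neg hij]
            exact hδpos
        · intro i _
          rcases eq_or_ne i j with rfl | hij
          · rw [if_pos rfl, hCj]
            exact hst
          · rw [if_neg hij, hCi i hij]
            exact hδ' i _ (hw i)
      calc δ ^ n * mn (Set.range Yv)
          ≤ δ ^ n * m1 (Set.range (fun ω => Yv ω j)) :=
            mul_le_mul_of_nonneg_left (hmnY_le j) (by positivity)
        _ = ∏ i, (if i = j then δ * m1 (Set.range (fun ω => Yv ω j)) else δ) := hf_prod.symm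
        _ < ∏ i, m1 (C i) := hlt
  -- moving a single coordinate along a per-coordinate path
  have hpath1 : ∀ (j : Fin n) (w : Fin n → 𝒳),
      (∀ i, w i ∈ Set.range (fun ω => Xv ω i)) →
      ∀ t, Relation.ReflTransGen (r j) (w j) t →
        Relation.ReflTransGen R w (Function.update w j t) := by
    intro j w hw t h
    induction h with
    | refl => rw [Function.update_eq_self]
    | tail h1 h2 ih =>
        rename_i c t'
        refine Relation.ReflTransGen.tail ih ?_
        have := hstep w hw j c t' h2
        exact this
  -- moving all coordinates
  have hpath : ∀ (u v : Fin n → 𝒳),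
      (∀ i, u i ∈ Set.range (fun ω => Xv ω i)) →
      (∀ i, v i ∈ Set.range (fun ω => Xv ω i)) →
      (∀ i, Relation.ReflTransGen (r i) (u i) (v i)) →
      Relation.ReflTransGen R u v := by
    intro u v hu hv huv
    have key : ∀ k : ℕ, k ≤ n →
        Relation.ReflTransGen R u (fun i => if (i : ℕ) < k then v i else u i) := by
      intro k
      induction k with
      | zero =>
          intro _
          have : (fun i : Fin n => if (i : ℕ) < 0 then v i else u i) = u := by
            funext i; simp
          rw [this]
      | succ k ih =>
          intro hk
          have hkn : k < n := by omega
          set j : Fin n := ⟨k, hkn⟩ with hjdef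
          set w : Fin n → 𝒳 := fun i => if (i : ℕ) < k then v i else u i with hwdef
          have hwr : ∀ i, w i ∈ Set.range (fun ω => Xv ω i) := by
            intro i; rw [hwdef]
            by_cases h : (i : ℕ) < k <;> simp [h, hu i, hv i]
          have hwj : w j = u j := by rw [hwdef]; simp [hjdef]
          have step : Relation.ReflTransGen R w (Function.update w j (v j)) := by
            refine hpath1 j w hwr (v j) ?_
            rw [hwj]
            exact huv j
          have heq : Function.update w j (v j) =
              (fun i : Fin n => if (i : ℕ) < k + 1 then v i else u i) := by
            funext i
            rcases eq_or_ne i j with rfl | hij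
            · simp [hjdef]
            · have hik : (i : ℕ) ≠ k := by
                intro hik
                exact hij (Fin.ext (by simp [hjdef, hik]))
              rw [Function.update_of_ne hij, hwdef]
              by_cases h : (i : ℕ) < k
              · simp [h, (show (i:ℕ) < k + 1 by omega)]
              · simp [h, show ¬ (i:ℕ) < k + 1 by omega]
          rw [heq] at step
          exact (ih (by omega)).trans step
    have := key n le_rfl
    have hvv : (fun i : Fin n => if (i : ℕ) < n then v i else u i) = v := by
      funext i; simp [i.isLt]
    rwa [hvv] at this
  -- converting a per-coordinate Conn into a ReflTransGen path
  have hconv : ∀ (i : Fin n) (z₁ z₂ : 𝒴), Conn m1 (fun ω => Yv ω i) (fun ω => Xv ω i) δ z₁ z₂ →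
      ∃ a b : 𝒳, a ∈ Set.range (fun ω => Xv ω i) ∧ b ∈ Set.range (fun ω => Xv ω i) ∧
        z₁ ∈ condRange (fun ω => Yv ω i) (fun ω => Xv ω i) a ∧
        z₂ ∈ condRange (fun ω => Yv ω i) (fun ω => Xv ω i) b ∧
        Relation.ReflTransGen (r i) a b := by
    rintro i z₁ z₂ ⟨N, ys, h1, h2, h3⟩
    refine ⟨ys 0, ys (Fin.last N), hrmem i _ ⟨z₁, h1⟩, hrmem i _ ⟨z₂, h2⟩, h1, h2, ?_⟩
    refine finChain_rtg ys ?_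
    intro k
    have hk := h3 k
    rw [lt_div_iff₀ (hrY_pos i)] at hk
    have hk' : δ * m1 (Set.range (fun ω => Yv ω i)) <
        m1 (condRange (fun ω => Yv ω i) (fun ω => Xv ω i) (ys k.succ) ∩
          condRange (fun ω => Yv ω i) (fun ω => Xv ω i) (ys k.castSucc)) := by
      linarith [mul_comm δ (m1 (Set.range (fun ω => Yv ω i)))]
    have hne : (condRange (fun ω => Yv ω i) (fun ω => Xv ω i) (ys k.succ) ∩
        condRange (fun ω => Yv ω i) (fun ω => Xv ω i) (ys k.castSucc)).Nonempty := by
      refine uf_nonempty hm1 (lt_of_le_of_lt ?_ hk')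
      exact mul_nonneg hδ0 (le_of_lt (hrY_pos i))
    obtain ⟨z, hz1, hz2⟩ := hne
    exact ⟨hrmem i _ ⟨z, hz2⟩, hrmem i _ ⟨z, hz1⟩, hk'⟩
  constructor
  · -- connectivity
    intro y₁ hy₁ y₂ hy₂
    have hc : ∀ i, Conn m1 (fun ω => Yv ω i) (fun ω => Xv ω i) δ (y₁ i) (y₂ i) :=
      fun i => ((hF i).2.1 (g i) (hg i)).1 (y₁ i) (hy₁ i (Set.mem_univ i))
        (y₂ i) (hy₂ i (Set.mem_univ i))
    choose a b ha hb hya hyb hab using fun i => hconv i (y₁ i) (y₂ i) (hc i)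
    have hRab : Relation.ReflTransGen R a b := hpath a b ha hb hab
    rw [hRdef] at hRab
    refine conn_of_rtg hRab ?_ ?_
    · rw [hY a (hmemX a ha)]
      exact fun i _ => hya i
    · rw [hY b (hmemX b hb)]
      exact fun i _ => hyb i
  · -- the singly connected subset
    refine ⟨xv, hxvr, ?_⟩
    rw [hY xv hxvr]
    exact fun y hy i hi => hxv2 i (hy i hi)


end NSIT
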